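/- Let R be a commutative ring, p,q,r,t ∈ R with t a unit, T ∈ R[x,y,z] a (p,q,r)-homogeneous polynomial of weight t, P = 1 + T, and S = R[x,y,z]/(P). Let ω_S = p x dy∧dz + q y dz∧dx + r z dx∧dy ∈ Λ²_S Ω_{S/R}. Then in Λ²_S Ω_{S/R} the following relations hold: dx∧dy = −t^{-1}(∂P/∂z)ω_S, dy∧dz = −t^{-1}(∂P/∂x)ω_S, and dz∧dx = −t^{-1}(∂P/∂y)ω_S. -/

import Mathlib

set_option maxHeartbeats 1000000
set_option synthInstance.maxHeartbeats 400000
open MvPolynomial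

/-- The hypersurface algebra `S = R[x,y,z]/(1+T)`. -/
abbrev HypSurf {R : Type*} [CommRing R] (T : MvPolynomial (Fin 3) R) : Type _ :=
  MvPolynomial (Fin 3) R ⧸ Ideal.span {(1 + T : MvPolynomial (Fin 3) R)}

/-- The class of a polynomial in `S = R[x,y,z]/(1+T)`. -/
noncomputable def hypCls {R : Type*} [CommRing R] (T f : MvPolynomial (Fin 3) R) :
    HypSurf T :=
  Ideal.Quotient.mk _ f

/-- `dx_i ∈ Ω_{S/R}` for `S = R[x,y,z]/(1+T)`. -/
noncomputable def hypD {R : Type*} [CommRing R] (T f : MvPolynomial (Fin 3) R) :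
    KaehlerDifferential R (HypSurf T) :=
  KaehlerDifferential.D R (HypSurf T) (hypCls T f)

/-- `ω_S = p x dy∧dz + q y dz∧dx + r z dx∧dy` as a degree-2 element of the exterior
algebra `Λ_S Ω_{S/R}`. -/
noncomputable def hypOmega {R : Type*} [CommRing R] (p q r : R)
    (T : MvPolynomial (Fin 3) R) :
    ExteriorAlgebra (HypSurf T) (KaehlerDifferential R (HypSurf T)) :=
  hypCls T (C p * X 0) •
      (ExteriorAlgebra.ι (HypSurf T) (hypD T (X 1)) * ExteriorAlgebra.ι (HypSurf T) (hypD T (X 2)))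
    + hypCls T (C q * X 1) •
      (ExteriorAlgebra.ι (HypSurf T) (hypD T (X 2)) * ExteriorAlgebra.ι (HypSurf T) (hypD T (X 0)))
    + hypCls T (C r * X 2) •
      (ExteriorAlgebra.ι (HypSurf T) (hypD T (X 0)) * ExteriorAlgebra.ι (HypSurf T) (hypD T (X 1)))

/- ### Auxiliary lemmas -/

open ExteriorAlgebra in
/-- The key exterior-algebra computation. -/
lemma ext_key {S : Type*} [CommRing S] {M : Type*} [AddCommGroup M] [Module S M]
    (a b c P0 P1 P2 s : S) (d0 d1 d2 : M)
    (hrel : P0 • d0 + P1 • d1 + P2 • d2 = 0)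
    (heuler : a * P0 + b * P1 + c * P2 = -s) :
    P2 • (a • (ι S d1 * ι S d2) + b • (ι S d2 * ι S d0) + c • (ι S d0 * ι S d1))
      = (-s) • (ι S d0 * ι S d1) := by
  have h2 : (P2 • d2 : M) = -(P0 • d0) - P1 • d1 := by
    apply eq_of_sub_eq_zero
    rw [← hrel]; abel
  have swap : ι S d1 * ι S d0 = -(ι S d0 * ι S d1) :=
    eq_neg_of_add_eq_zero_right (ι_add_mul_swap d0 d1)
  have c1 : ι S d1 * (P2 • ι S d2) = P0 • (ι S d0 * ι S d1) := by
    rw [← map_smul, h2, map_sub, map_neg, map_smul, map_smul,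
      mul_sub, mul_neg, mul_smul_comm, mul_smul_comm, ι_sq_zero, smul_zero, sub_zero,
      swap, smul_neg, neg_neg]
  have c2 : (P2 • ι S d2) * ι S d0 = P1 • (ι S d0 * ι S d1) := by
    rw [← map_smul, h2, map_sub, map_neg, map_smul, map_smul,
      sub_mul, neg_mul, smul_mul_assoc, smul_mul_assoc, ι_sq_zero, smul_zero, neg_zero,
      zero_sub, swap, smul_neg, neg_neg]
  rw [smul_add, smul_add, smul_comm P2 a, smul_comm P2 b, smul_comm P2 c,
    ← mul_smul_comm P2, ← smul_mul_assoc P2, c1, c2,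
    smul_smul, smul_smul, smul_smul, ← add_smul, ← add_smul, heuler]

lemma hypCls_add {R : Type*} [CommRing R] (T f g : MvPolynomial (Fin 3) R) :
    hypCls T (f + g) = hypCls T f + hypCls T g := map_add _ _ _

lemma hypCls_mul {R : Type*} [CommRing R] (T f g : MvPolynomial (Fin 3) R) :
    hypCls T (f * g) = hypCls T f * hypCls T g := map_mul _ _ _

lemma hypD_add {R : Type*} [CommRing R] (T f g : MvPolynomial (Fin 3) R) :
    hypD T (f + g) = hypD T f + hypD T g := by
  unfold hypD; rw [hypCls_add, map_add]

lemma hypD_C {R : Type*} [CommRing R] (T : MvPolynomial (Fin 3) R) (a : R) :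
    hypD T (C a) = 0 := by
  have : hypCls T (C a) = algebraMap R (HypSurf T) a := rfl
  unfold hypD; rw [this, Derivation.map_algebraMap]

lemma hypD_mul {R : Type*} [CommRing R] (T f g : MvPolynomial (Fin 3) R) :
    hypD T (f * g) = hypCls T f • hypD T g + hypCls T g • hypD T f := by
  unfold hypD; rw [hypCls_mul, Derivation.leibniz]

/-- The chain rule in `Ω_{S/R}`. -/
lemma hypD_eq {R : Type*} [CommRing R] (T f : MvPolynomial (Fin 3) R) :
    hypD T f = hypCls T (pderiv 0 f) • hypD T (X 0) + hypCls T (pderiv 1 f) • hypD T (X 1)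
      + hypCls T (pderiv 2 f) • hypD T (X 2) := by
  induction f using MvPolynomial.induction_on with
  | C a => simp [hypD_C, pderiv_C, hypCls]; module
  | add f g hf hg =>
      rw [hypD_add, hf, hg]
      simp only [map_add, hypCls_add, add_smul]
      module
  | mul_X f i hf =>
      rw [hypD_mul, hf]
      fin_cases i
      · show hypCls T f • hypD T (X 0) + hypCls T (X 0) •
              (hypCls T ((pderiv 0) f) • hypD T (X 0) + hypCls T ((pderiv 1) f) • hypD T (X 1)
                + hypCls T ((pderiv 2) f) • hypD T (X 2))
            = hypCls T ((pderiv 0) (f * X 0)) • hypD T (X 0)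
            + hypCls T ((pderiv 1) (f * X 0)) • hypD T (X 1)
            + hypCls T ((pderiv 2) (f * X 0)) • hypD T (X 2)
        rw [show (pderiv 0) (f * X 0) = (pderiv 0) f * X 0 + f from by
            rw [pderiv_mul, pderiv_X_self, mul_one],
          show (pderiv 1) (f * X 0) = (pderiv 1) f * X 0 from by
            rw [pderiv_mul, pderiv_X_of_ne (by decide), mul_zero, add_zero],
          show (pderiv 2) (f * X 0) = (pderiv 2) f * X 0 from by
            rw [pderiv_mul, pderiv_X_of_ne (by decide), mul_zero, add_zero],
          hypCls_add, hypCls_mul, hypCls_mul, hypCls_mul]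
        module
      · show hypCls T f • hypD T (X 1) + hypCls T (X 1) •
              (hypCls T ((pderiv 0) f) • hypD T (X 0) + hypCls T ((pderiv 1) f) • hypD T (X 1)
                + hypCls T ((pderiv 2) f) • hypD T (X 2))
            = hypCls T ((pderiv 0) (f * X 1)) • hypD T (X 0)
            + hypCls T ((pderiv 1) (f * X 1)) • hypD T (X 1)
            + hypCls T ((pderiv 2) (f * X 1)) • hypD T (X 2)
        rw [show (pderiv 0) (f * X 1) = (pderiv 0) f * X 1 from by
            rw [pderiv_mul, pderiv_X_of_ne (by decide), mul_zero, add_zero],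
          show (pderiv 1) (f * X 1) = (pderiv 1) f * X 1 + f from by
            rw [pderiv_mul, pderiv_X_self, mul_one],
          show (pderiv 2) (f * X 1) = (pderiv 2) f * X 1 from by
            rw [pderiv_mul, pderiv_X_of_ne (by decide), mul_zero, add_zero],
          hypCls_add, hypCls_mul, hypCls_mul, hypCls_mul]
        module
      · show hypCls T f • hypD T (X 2) + hypCls T (X 2) •
              (hypCls T ((pderiv 0) f) • hypD T (X 0) + hypCls T ((pderiv 1) f) • hypD T (X 1)
                + hypCls T ((pderiv 2) f) • hypD T (X 2))
            = hypCls T ((pderiv 0) (f * X 2)) • hypD T (X 0)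
            + hypCls T ((pderiv 1) (f * X 2)) • hypD T (X 1)
            + hypCls T ((pderiv 2) (f * X 2)) • hypD T (X 2)
        rw [show (pderiv 0) (f * X 2) = (pderiv 0) f * X 2 from by
            rw [pderiv_mul, pderiv_X_of_ne (by decide), mul_zero, add_zero],
          show (pderiv 1) (f * X 2) = (pderiv 1) f * X 2 from by
            rw [pderiv_mul, pderiv_X_of_ne (by decide), mul_zero, add_zero],
          show (pderiv 2) (f * X 2) = (pderiv 2) f * X 2 + f from by
            rw [pderiv_mul, pderiv_X_self, mul_one],
          hypCls_add, hypCls_mul, hypCls_mul, hypCls_mul]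
        module

lemma X_mul_pd_monomial {R : Type*} [CommRing R] (i : Fin 3) (m : Fin 3 →₀ ℕ) (a : R) :
    X i * pderiv i (monomial m a) = monomial m (a * (m i : R)) := by
  rw [pderiv_monomial]
  by_cases h : m i = 0
  · rw [h]; simp
  · rw [X, monomial_mul, one_mul, add_comm,
      tsub_add_cancel_of_le (by rwa [Finsupp.single_le_iff, Nat.one_le_iff_ne_zero])]

/-- Euler's identity for `(p,q,r)`-homogeneous polynomials of weight `t`. -/
lemma euler_pol {R : Type*} [CommRing R] (p q r t : R) (T : MvPolynomial (Fin 3) R)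
    (hhom : ∀ m ∈ T.support, p * (m 0 : R) + q * (m 1 : R) + r * (m 2 : R) = t) :
    C p * X 0 * pderiv 0 T + C q * X 1 * pderiv 1 T + C r * X 2 * pderiv 2 T
      = C t * T := by
  rw [mul_assoc, mul_assoc, mul_assoc]
  conv_lhs => rw [T.as_sum]
  conv_rhs => rw [T.as_sum]
  rw [map_sum (pderiv 0), map_sum (pderiv 1), map_sum (pderiv 2)]
  rw [Finset.mul_sum, Finset.mul_sum, Finset.mul_sum, Finset.mul_sum, Finset.mul_sum,
    Finset.mul_sum, Finset.mul_sum, ← Finset.sum_add_distrib, ← Finset.sum_add_distrib]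
  refine Finset.sum_congr rfl fun m hm => ?_
  rw [X_mul_pd_monomial, X_mul_pd_monomial, X_mul_pd_monomial, C_mul_monomial,
    C_mul_monomial, C_mul_monomial, C_mul_monomial, ← map_add, ← map_add]
  congr 1
  rw [← hhom m hm]; ring

/-- Let `T ∈ R[x,y,z]` be `(p,q,r)`-homogeneous of weight `t ∈ R^×`
(with `u = t⁻¹`), `P = 1+T` and `S = R[x,y,z]/(P)`.  With
`ω_S = p x dy∧dz + q y dz∧dx + r z dx∧dy ∈ Λ²_S Ω_{S/R}`, the relations
`dx∧dy = −t⁻¹(∂P/∂z)ω_S`, `dy∧dz = −t⁻¹(∂P/∂x)ω_S`, `dz∧dx = −t⁻¹(∂P/∂y)ω_S` hold. -/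
theorem stmt18 {R : Type*} [CommRing R] (p q r t u : R) (htu : t * u = 1)
    (T : MvPolynomial (Fin 3) R)
    (hhom : ∀ m ∈ T.support, p * (m 0 : R) + q * (m 1 : R) + r * (m 2 : R) = t) :
    (ExteriorAlgebra.ι (HypSurf T) (hypD T (X 0)) * ExteriorAlgebra.ι (HypSurf T) (hypD T (X 1))
        = (-(hypCls T (C u * pderiv 2 (1 + T)))) • hypOmega p q r T) ∧
    (ExteriorAlgebra.ι (HypSurf T) (hypD T (X 1)) * ExteriorAlgebra.ι (HypSurf T) (hypD T (X 2))
        = (-(hypCls T (C u * pderiv 0 (1 + T)))) • hypOmega p q r T) ∧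
    (ExteriorAlgebra.ι (HypSurf T) (hypD T (X 2)) * ExteriorAlgebra.ι (HypSurf T) (hypD T (X 0))
        = (-(hypCls T (C u * pderiv 1 (1 + T)))) • hypOmega p q r T) := by
  set S := HypSurf T
  set d0 := hypD T (X 0)
  set d1 := hypD T (X 1)
  set d2 := hypD T (X 2)
  set a := hypCls T (C p * X 0) with ha
  set b := hypCls T (C q * X 1) with hb
  set c := hypCls T (C r * X 2) with hc
  set P0 := hypCls T (pderiv 0 (1 + T)) with hP0
  set P1 := hypCls T (pderiv 1 (1 + T)) with hP1
  set P2 := hypCls T (pderiv 2 (1 + T)) with hP2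
  set s := hypCls T (C t) with hs
  -- the class of `1 + T` vanishes
  have hzero : hypCls T (1 + T) = 0 :=
    Ideal.Quotient.eq_zero_iff_mem.mpr (Ideal.subset_span rfl)
  -- the fundamental relation of Kähler differentials
  have hrel : P0 • d0 + P1 • d1 + P2 • d2 = 0 := by
    have h := (hypD_eq T (1 + T)).symm
    rwa [show hypD T (1 + T) = 0 from by unfold hypD; rw [hzero, map_zero]] at h
  -- the Euler relation in `S`
  have hd : ∀ i : Fin 3, pderiv i (1 + T) = pderiv i T := by
    intro i; rw [map_add, pderiv_one, zero_add]
  have hT : hypCls T T = -1 := by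
    have h1 := hzero
    rw [hypCls_add, show hypCls T 1 = 1 from map_one _] at h1
    exact eq_neg_of_add_eq_zero_right h1
  have heuler : a * P0 + b * P1 + c * P2 = -s := by
    have h : a * P0 + b * P1 + c * P2 = s * hypCls T T := by
      rw [ha, hb, hc, hP0, hP1, hP2, hs, hd 0, hd 1, hd 2, ← hypCls_mul, ← hypCls_mul,
        ← hypCls_mul, ← hypCls_mul, ← hypCls_add, ← hypCls_add]
      exact congrArg (hypCls T) (euler_pol p q r t T hhom)
    rw [h, hT]; ring
  have hu : hypCls T (C u) * s = 1 := by
    rw [hs, ← hypCls_mul, ← C_mul, mul_comm u t, htu, C_1]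
    exact map_one _
  have hω : hypOmega p q r T
      = a • (ExteriorAlgebra.ι S d1 * ExteriorAlgebra.ι S d2)
        + b • (ExteriorAlgebra.ι S d2 * ExteriorAlgebra.ι S d0)
        + c • (ExteriorAlgebra.ι S d0 * ExteriorAlgebra.ι S d1) := rfl
  refine ⟨?_, ?_, ?_⟩
  · have key := ext_key a b c P0 P1 P2 s d0 d1 d2 hrel heuler
    rw [show hypCls T (C u * pderiv 2 (1 + T)) = hypCls T (C u) * P2 from by
        rw [hypCls_mul, hP2],
      hω]
    linear_combination (norm := module) hypCls T (C u) • key - hu • (ExteriorAlgebra.ι S d0 * ExteriorAlgebra.ι S d1)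
  · have hrel2 : P1 • d1 + P2 • d2 + P0 • d0 = 0 := by rw [← hrel]; abel
    have heuler2 : b * P1 + c * P2 + a * P0 = -s := by rw [← heuler]; ring
    have key := ext_key b c a P1 P2 P0 s d1 d2 d0 hrel2 heuler2
    rw [show hypCls T (C u * pderiv 0 (1 + T)) = hypCls T (C u) * P0 from by
        rw [hypCls_mul, hP0],
      hω.trans (add_rotate _ _ _)]
    linear_combination (norm := module) hypCls T (C u) • key - hu • (ExteriorAlgebra.ι S d1 * ExteriorAlgebra.ι S d2)
  · have hrel3 : P2 • d2 + P0 • d0 + P1 • d1 = 0 := by rw [← hrel]; abel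
    have heuler3 : c * P2 + a * P0 + b * P1 = -s := by rw [← heuler]; ring
    have key := ext_key c a b P2 P0 P1 s d2 d0 d1 hrel3 heuler3
    rw [show hypCls T (C u * pderiv 1 (1 + T)) = hypCls T (C u) * P1 from by
        rw [hypCls_mul, hP1],
      hω.trans ((add_rotate _ _ _).trans (add_rotate _ _ _))]
    linear_combination (norm := module) hypCls T (C u) • key - hu • (ExteriorAlgebra.ι S d2 * ExteriorAlgebra.ι S d0)
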